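/- Let K be an origin-symmetric planar convex body and let [x⁻, x⁺] be a non-degenerate segment contained in ∂K. If y ∈ ∂K is parallel to the segment (i.e., y is a positive multiple of x⁺ − x⁻), then x⁻ ⊣ y and x⁺ ⊣ y. -/

import Mathlib

open Set MeasureTheory Pointwise

abbrev Plane := ℝ × ℝ

/-- An origin-symmetric convex body in the plane: compact, convex,
nonempty interior, symmetric about the origin. -/
def IsSymmConvexBody (K : Set Plane) : Prop :=
  Convex ℝ K ∧ IsCompact K ∧ (interior K).Nonempty ∧ K = -K

/-- Birkhoff orthogonality with respect to the norm induced by `K`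
(whose Minkowski functional is `gauge K`). -/
def BOrth (K : Set Plane) (x y : Plane) : Prop :=
  ∀ t : ℝ, gauge K x ≤ gauge K (x + t • y)

/-- The set of Auerbach points of `K`. -/
def Auerbach (K : Set Plane) : Set Plane :=
  {x | x ∈ frontier K ∧ ∃ y ∈ frontier K, BOrth K x y ∧ BOrth K y x}

/-- `E(K)`: the union of the open non-degenerate segments contained in `∂K`. -/
def SegUnion (K : Set Plane) : Set Plane :=
  {x | ∃ a b : Plane, a ≠ b ∧ segment ℝ a b ⊆ frontier K ∧ x ∈ openSegment ℝ a b}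

/-- A closed antipode-free arc of `∂K` with endpoints `x` and `y`:
a closed connected subset of `∂K` containing `x` and `y`, containing no
pair of antipodal points, and minimal with these properties. -/
def IsBArc (K C : Set Plane) (x y : Plane) : Prop :=
  C ⊆ frontier K ∧ IsClosed C ∧ IsPreconnected C ∧ x ∈ C ∧ y ∈ C ∧
  (∀ z ∈ C, -z ∉ C) ∧
  ∀ C' ⊆ C, IsClosed C' → IsPreconnected C' → x ∈ C' → y ∈ C' → C' = C

/-- An angular measure on `∂K`. -/
def IsAngularMeasure (K : Set Plane) (μ : Measure Plane) : Prop :=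
  μ (frontier K) = ENNReal.ofReal (2 * Real.pi) ∧
  μ (frontier K)ᶜ = 0 ∧
  (∀ X : Set Plane, μ (-X) = μ X) ∧
  (∀ x : Plane, μ {x} = 0)

/-- A B-measure: an angular measure giving `π/2` to every closed
antipode-free arc whose endpoints are Birkhoff orthogonal. -/
def IsBMeasure (K : Set Plane) (μ : Measure Plane) : Prop :=
  IsAngularMeasure K μ ∧
  ∀ C x y, IsBArc K C x y → BOrth K x y → μ C = ENNReal.ofReal (Real.pi / 2)

/-- The support of a Borel measure: the points all of whose open
neighborhoods have positive measure. -/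
def msupp {α : Type*} [TopologicalSpace α] [MeasurableSpace α]
    (μ : Measure α) : Set α :=
  {x | ∀ U : Set α, IsOpen U → x ∈ U → 0 < μ U}

/-- The endpoints of a boundary segment are Birkhoff orthogonal to any
boundary point parallel to the segment. -/
theorem stmt_8 (K : Set Plane) (hK : IsSymmConvexBody K)
    (a b : Plane) (hab : a ≠ b) (hseg : segment ℝ a b ⊆ frontier K)
    (y : Plane) (hy : y ∈ frontier K) (c : ℝ) (hc : 0 < c)
    (hpar : y = c • (b - a)) :
    BOrth K a y ∧ BOrth K b y := by
  obtain ⟨hconv, hcomp, hne, hsymm⟩ := hK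
  -- 0 is in the interior of K
  have h0 : (0 : Plane) ∈ interior K := by
    obtain ⟨x, hx⟩ := hne
    have hx' : -x ∈ interior K := by
      have h2 : interior (-K) = -interior K := by
        have := (Homeomorph.neg Plane).image_interior K
        simpa [Set.image_neg] using this.symm
      have : -x ∈ interior (-K) := by rw [h2]; exact Set.neg_mem_neg.2 hx
      rwa [← hsymm] at this
    have := hconv.interior hx hx' (by norm_num : (0:ℝ) ≤ 1/2)
      (by norm_num : (0:ℝ) ≤ 1/2) (by norm_num)
    simpa using this
  have hnhds : K ∈ nhds (0 : Plane) := mem_interior_iff_mem_nhds.mp h0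
  have habs : Absorbent ℝ K := absorbent_nhds_zero hnhds
  have hfr : ∀ z ∈ frontier K, gauge K z = 1 := fun z hz =>
    (gauge_eq_one_iff_mem_frontier hconv hnhds).2 hz
  -- convexity of the gauge
  have gconv : ∀ (u v : Plane) (θ : ℝ), 0 ≤ θ → θ ≤ 1 →
      gauge K ((1 - θ) • u + θ • v) ≤ (1 - θ) * gauge K u + θ * gauge K v := by
    intro u v θ h0θ hθ1
    calc gauge K ((1 - θ) • u + θ • v)
        ≤ gauge K ((1 - θ) • u) + gauge K (θ • v) := gauge_add_le hconv habs _ _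
      _ = (1 - θ) * gauge K u + θ * gauge K v := by
          rw [gauge_smul_of_nonneg (by linarith), gauge_smul_of_nonneg h0θ,
            smul_eq_mul, smul_eq_mul]
  -- gauge equals 1 on the segment
  have hmem : ∀ s : ℝ, 0 ≤ s → s ≤ 1 → gauge K (a + s • (b - a)) = 1 := by
    intro s hs0 hs1
    refine hfr _ (hseg ⟨1 - s, s, by linarith, hs0, by ring, by module⟩)
  -- key: gauge ≥ 1 along the whole line through a and b
  have hL : ∀ s : ℝ, 1 ≤ gauge K (a + s • (b - a)) := by
    intro s
    rcases le_or_gt s 0 with hs | hs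
    · rcases eq_or_lt_of_le hs with h | h
      · rw [h]; exact (hmem 0 le_rfl zero_le_one).ge
      · -- s < 0 : use midpoint between a+s(b-a) and b
        set θ : ℝ := (1/2 - s) / (1 - s) with hθdef
        have h1s : (0:ℝ) < 1 - s := by linarith
        have hθ0 : 0 ≤ θ := div_nonneg (by linarith) h1s.le
        have hθ1 : θ < 1 := by
          rw [div_lt_one h1s]; linarith
        have hvec : (1 - θ) • (a + s • (b - a)) + θ • (a + (1:ℝ) • (b - a))
            = a + ((1 - θ) * s + θ) • (b - a) := by module
        have hcoef : (1 - θ) * s + θ = 1/2 := by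
          rw [hθdef]; field_simp; ring
        have key := gconv (a + s • (b - a)) (a + (1:ℝ) • (b - a)) θ hθ0 hθ1.le
        rw [hvec, hcoef] at key
        rw [hmem (1/2) (by norm_num) (by norm_num), hmem 1 zero_le_one le_rfl] at key
        nlinarith [key]
    · rcases le_or_gt s 1 with hs1 | hs1
      · exact (hmem s hs.le hs1).ge
      · -- s > 1 : use midpoint between a and a+s(b-a)
        set θ : ℝ := 1 / (2 * s) with hθdef
        have hspos : (0:ℝ) < s := by linarith
        have hθ0 : 0 < θ := by positivity
        have hθ1 : θ ≤ 1 := by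
          rw [hθdef, div_le_one (by linarith)]; linarith
        have hvec : (1 - θ) • a + θ • (a + s • (b - a))
            = a + (θ * s) • (b - a) := by module
        have hcoef : θ * s = 1/2 := by
          rw [hθdef]; field_simp
        have key := gconv a (a + s • (b - a)) θ hθ0.le hθ1
        rw [hvec, hcoef] at key
        have ha1 : gauge K a = 1 := hfr a (hseg (left_mem_segment ℝ a b))
        rw [hmem (1/2) (by norm_num) (by norm_num), ha1] at key
        nlinarith [key]
  have ha1 : gauge K a = 1 := hfr a (hseg (left_mem_segment ℝ a b))
  have hb1 : gauge K b = 1 := hfr b (hseg (right_mem_segment ℝ a b))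
  constructor
  · intro t
    rw [ha1, hpar]
    have : a + t • c • (b - a) = a + (t * c) • (b - a) := by module
    rw [this]
    exact hL (t * c)
  · intro t
    rw [hb1, hpar]
    have : b + t • c • (b - a) = a + (1 + t * c) • (b - a) := by module
    rw [this]
    exact hL (1 + t * c)
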